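/- For a rank-m tensor T = Σ_{j=1}^m a_j⊗b_j⊗c_j with {a_j}, {b_j}, {c_j} each a basis (i.e., T ≅ M_{⟨1⟩}^{⊕m}, the unit tensor), the symmetry Lie algebra ĝ_T = {(X,Y,Z) ∈ gl(A)⊕gl(B)⊕gl(C) : X.T + Y.T + Z.T = 0} has dimension 2m. -/

import Mathlib

/-- The linear action `X ↦ (X⊗Id⊗Id)T` of `gl(A)` on `A⊗B⊗C`. -/
noncomputable def actA {m : ℕ} (T : Fin m → Fin m → Fin m → ℂ) :
    Matrix (Fin m) (Fin m) ℂ →ₗ[ℂ] (Fin m → Fin m → Fin m → ℂ) where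
  toFun X := fun i j k => ∑ i', X i i' * T i' j k
  map_add' X Y := by funext i j k; simp [add_mul, Finset.sum_add_distrib]
  map_smul' c X := by
    funext i j k
    simp [Matrix.smul_apply, smul_eq_mul, Finset.mul_sum, mul_assoc]

/-- The linear action `Y ↦ (Id⊗Y⊗Id)T`. -/
noncomputable def actB {m : ℕ} (T : Fin m → Fin m → Fin m → ℂ) :
    Matrix (Fin m) (Fin m) ℂ →ₗ[ℂ] (Fin m → Fin m → Fin m → ℂ) where
  toFun Y := fun i j k => ∑ j', Y j j' * T i j' k
  map_add' X Y := by funext i j k; simp [add_mul, Finset.sum_add_distrib]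
  map_smul' c X := by
    funext i j k
    simp [Matrix.smul_apply, smul_eq_mul, Finset.mul_sum, mul_assoc]

/-- The linear action `Z ↦ (Id⊗Id⊗Z)T`. -/
noncomputable def actC {m : ℕ} (T : Fin m → Fin m → Fin m → ℂ) :
    Matrix (Fin m) (Fin m) ℂ →ₗ[ℂ] (Fin m → Fin m → Fin m → ℂ) where
  toFun Z := fun i j k => ∑ k', Z k k' * T i j k'
  map_add' X Y := by funext i j k; simp [add_mul, Finset.sum_add_distrib]
  map_smul' c X := by
    funext i j k
    simp [Matrix.smul_apply, smul_eq_mul, Finset.mul_sum, mul_assoc]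

/-- The symmetry Lie algebra `ĝ_T = {(X,Y,Z) : X.T + Y.T + Z.T = 0}`
as the kernel of the linear map `(X,Y,Z) ↦ X.T + Y.T + Z.T`. -/
noncomputable def symLie {m : ℕ} (T : Fin m → Fin m → Fin m → ℂ) :
    Submodule ℂ (Matrix (Fin m) (Fin m) ℂ ×
      Matrix (Fin m) (Fin m) ℂ × Matrix (Fin m) (Fin m) ℂ) :=
  LinearMap.ker
    ((actA T).comp (LinearMap.fst ℂ _ _) +
      (actB T).comp ((LinearMap.fst ℂ _ _).comp (LinearMap.snd ℂ _ _)) +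
      (actC T).comp ((LinearMap.snd ℂ _ _).comp (LinearMap.snd ℂ _ _)))


/-! ### Auxiliary lemmas -/

lemma aux_inj {m : ℕ} (P : Matrix (Fin m) (Fin m) ℂ) [Invertible P]
    {V : Type*} [AddCommGroup V] [Module ℂ V] (v : Fin m → V)
    (h : ∀ i, ∑ s, P i s • v s = 0) (s : Fin m) : v s = 0 := by
  calc v s = ∑ t, ((P⁻¹ * P : Matrix _ _ ℂ) s t) • v t := by
        simp [Matrix.inv_mul_of_invertible, Matrix.one_apply, ite_smul]
    _ = ∑ i, (P⁻¹ : Matrix _ _ ℂ) s i • (∑ t, P i t • v t) := by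
        simp only [Matrix.mul_apply, Finset.sum_smul, Finset.smul_sum, mul_smul]
        rw [Finset.sum_comm]
    _ = 0 := by simp [h]

lemma mem_symLie_iff {m : ℕ} (T : Fin m → Fin m → Fin m → ℂ)
    (W : Matrix (Fin m) (Fin m) ℂ × Matrix (Fin m) (Fin m) ℂ × Matrix (Fin m) (Fin m) ℂ) :
    W ∈ symLie T ↔ ∀ i j k,
      (∑ i', W.1 i i' * T i' j k) + (∑ j', W.2.1 j j' * T i j' k)
        + (∑ k', W.2.2 k k' * T i j k') = 0 := by
  simp [symLie, LinearMap.mem_ker, actA, actB, actC, funext_iff, add_assoc]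

/-- conjugation equivalence -/
noncomputable def conjE {m : ℕ} (P : Matrix (Fin m) (Fin m) ℂ) [Invertible P] :
    Matrix (Fin m) (Fin m) ℂ ≃ₗ[ℂ] Matrix (Fin m) (Fin m) ℂ where
  toFun X := P⁻¹ * X * P
  invFun X := P * X * P⁻¹
  map_add' X Y := by noncomm_ring
  map_smul' c X := by simp [Matrix.mul_smul, Matrix.smul_mul]
  left_inv X := by
    simp [Matrix.mul_assoc, Matrix.mul_inv_cancel_left_of_invertible,
      Matrix.mul_nonsing_inv_cancel_right, Matrix.mul_inv_of_invertible,
      Matrix.inv_mul_of_invertible]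
  right_inv X := by
    simp [Matrix.mul_assoc, Matrix.inv_mul_cancel_left_of_invertible,
      Matrix.mul_inv_of_invertible, Matrix.inv_mul_of_invertible]

@[simp] lemma conjE_apply {m : ℕ} (P : Matrix (Fin m) (Fin m) ℂ) [Invertible P]
    (X : Matrix (Fin m) (Fin m) ℂ) : conjE P X = P⁻¹ * X * P := rfl

/-- The unit tensor. -/
def T0 (m : ℕ) : Fin m → Fin m → Fin m → ℂ :=
  fun i j k => if i = j ∧ j = k then 1 else 0

lemma mem_symLie_T0_iff {m : ℕ}
    (W : Matrix (Fin m) (Fin m) ℂ × Matrix (Fin m) (Fin m) ℂ × Matrix (Fin m) (Fin m) ℂ) :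
    W ∈ symLie (T0 m) ↔ ∀ s t u,
      W.1 s t * (if t = u then (1:ℂ) else 0) + W.2.1 t s * (if s = u then 1 else 0)
        + W.2.2 u t * (if s = t then 1 else 0) = 0 := by
  rw [mem_symLie_iff]
  constructor <;> intro h i j k <;> have := h i j k <;>
    simpa [T0, ite_and, Finset.sum_ite_eq, Finset.sum_ite_eq', mul_ite, eq_comm] using this

noncomputable def phiMap (m : ℕ) :
    ((Fin m → ℂ) × (Fin m → ℂ)) →ₗ[ℂ] (Matrix (Fin m) (Fin m) ℂ ×
      Matrix (Fin m) (Fin m) ℂ × Matrix (Fin m) (Fin m) ℂ) where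
  toFun p := (Matrix.diagonal p.1, Matrix.diagonal p.2, Matrix.diagonal (-p.1 - p.2))
  map_add' p q := by
    refine Prod.ext ?_ (Prod.ext ?_ ?_) <;>
    · ext i j; by_cases h : i = j <;> simp [Matrix.diagonal_apply, h] <;> ring
  map_smul' c p := by
    refine Prod.ext ?_ (Prod.ext ?_ ?_) <;>
    · ext i j; by_cases h : i = j <;> simp [Matrix.diagonal_apply, h] <;> ring

lemma phiMap_inj (m : ℕ) : Function.Injective (phiMap m) := by
  intro p q h
  have h1 := congrArg Prod.fst h
  have h2 := congrArg (fun w => w.2.1) h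
  simp only [phiMap, LinearMap.coe_mk, AddHom.coe_mk] at h1 h2
  exact Prod.ext (Matrix.diagonal_injective h1) (Matrix.diagonal_injective h2)

lemma symLie_T0_eq_range (m : ℕ) : symLie (T0 m) = LinearMap.range (phiMap m) := by
  ext W
  rw [mem_symLie_T0_iff]
  constructor
  · intro h
    refine ⟨(fun i => W.1 i i, fun i => W.2.1 i i), ?_⟩
    have hX : W.1 = Matrix.diagonal (fun i => W.1 i i) := by
      ext i j
      by_cases hij : i = j
      · simp [hij, Matrix.diagonal_apply]
      · have := h i j j
        simpa [hij, Matrix.diagonal_apply] using this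
    have hY : W.2.1 = Matrix.diagonal (fun i => W.2.1 i i) := by
      ext p q
      by_cases hpq : p = q
      · simp [hpq, Matrix.diagonal_apply]
      · have := h q p q
        simp [hpq, Ne.symm hpq, Matrix.diagonal_apply] at this ⊢
        exact this
    have hZ : W.2.2 = Matrix.diagonal (fun i => -(W.1 i i) - (W.2.1 i i)) := by
      ext p q
      by_cases hpq : p = q
      · have := h q q q
        simp [hpq, Matrix.diagonal_apply] at this ⊢
        linear_combination this
      · have := h q q p
        simp [hpq, Ne.symm hpq, Matrix.diagonal_apply] at this ⊢
        exact this
    refine Prod.ext hX.symm (Prod.ext hY.symm ?_)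
    exact hZ.symm
  · rintro ⟨p, rfl⟩ s t u
    by_cases hst : s = t
    · by_cases htu : t = u
      · subst hst; subst htu; simp [phiMap, Matrix.diagonal_apply]
      · have hut : ¬ u = t := fun h => htu h.symm
        have hsu : ¬ s = u := by rw [hst]; exact fun h => htu h
        simp [phiMap, Matrix.diagonal_apply, hst, htu, hut, hsu]
    · by_cases htu : t = u
      · have hsu : ¬ s = u := by rw [← htu]; exact hst
        simp [phiMap, Matrix.diagonal_apply, hst, htu, hsu]
      · by_cases hsu : s = u
        · have hts : ¬ t = s := fun h => hst h.symm
          have hut : ¬ u = t := fun h => htu h.symm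
          simp [phiMap, Matrix.diagonal_apply, hst, htu, hsu, hts, hut]
        · simp [phiMap, Matrix.diagonal_apply, hst, htu, hsu]

lemma finrank_symLie_T0 (m : ℕ) :
    Module.finrank ℂ ↥(symLie (T0 m)) = 2 * m := by
  rw [symLie_T0_eq_range, LinearMap.finrank_range_of_inj (phiMap_inj m),
    Module.finrank_prod, Module.finrank_fin_fun]
  ring

lemma keyA {m : ℕ} (P Q R X : Matrix (Fin m) (Fin m) ℂ) [Invertible P] (i j k : Fin m) :
    ∑ i', X i i' * (∑ l, P i' l * Q j l * R k l)
      = ∑ s, ∑ t, ∑ u, P i s * Q j t * R k u *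
          ((P⁻¹ * X * P) s t * (if t = u then 1 else 0)) := by
  have hM : P * (P⁻¹ * X * P) = X * P := by
    rw [Matrix.mul_assoc, Matrix.mul_inv_cancel_left_of_invertible]
  have hstep : ∀ l, (X * P) i l = ∑ s, P i s * (P⁻¹ * X * P) s l := by
    intro l; rw [← hM, Matrix.mul_apply]
  calc ∑ i', X i i' * (∑ l, P i' l * Q j l * R k l)
      = ∑ l, (X * P) i l * (Q j l * R k l) := by
        simp only [Finset.mul_sum, Matrix.mul_apply, Finset.sum_mul]
        rw [Finset.sum_comm]
        exact Finset.sum_congr rfl fun l _ => Finset.sum_congr rfl fun i' _ => by ring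
    _ = ∑ l, ∑ s, P i s * (P⁻¹ * X * P) s l * (Q j l * R k l) := by
        simp only [hstep, Finset.sum_mul]
    _ = ∑ s, ∑ t, ∑ u, P i s * Q j t * R k u *
          ((P⁻¹ * X * P) s t * (if t = u then 1 else 0)) := by
        simp only [mul_ite, mul_one, mul_zero, Finset.sum_ite_eq, Finset.mem_univ, if_pos]
        rw [Finset.sum_comm]
        exact Finset.sum_congr rfl fun s _ => Finset.sum_congr rfl fun t _ => by ring

lemma keyB {m : ℕ} (P Q R Y : Matrix (Fin m) (Fin m) ℂ) [Invertible Q] (i j k : Fin m) :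
    ∑ j', Y j j' * (∑ l, P i l * Q j' l * R k l)
      = ∑ s, ∑ t, ∑ u, P i s * Q j t * R k u *
          ((Q⁻¹ * Y * Q) t s * (if s = u then 1 else 0)) := by
  have hM : Q * (Q⁻¹ * Y * Q) = Y * Q := by
    rw [Matrix.mul_assoc, Matrix.mul_inv_cancel_left_of_invertible]
  have hstep : ∀ l, (Y * Q) j l = ∑ t, Q j t * (Q⁻¹ * Y * Q) t l := by
    intro l; rw [← hM, Matrix.mul_apply]
  calc ∑ j', Y j j' * (∑ l, P i l * Q j' l * R k l)
      = ∑ l, (Y * Q) j l * (P i l * R k l) := by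
        simp only [Finset.mul_sum, Matrix.mul_apply, Finset.sum_mul]
        rw [Finset.sum_comm]
        exact Finset.sum_congr rfl fun l _ => Finset.sum_congr rfl fun j' _ => by ring
    _ = ∑ l, ∑ t, Q j t * (Q⁻¹ * Y * Q) t l * (P i l * R k l) := by
        simp only [hstep, Finset.sum_mul]
    _ = ∑ s, ∑ t, ∑ u, P i s * Q j t * R k u *
          ((Q⁻¹ * Y * Q) t s * (if s = u then 1 else 0)) := by
        simp only [mul_ite, mul_one, mul_zero, Finset.sum_ite_eq, Finset.mem_univ, if_pos]
        exact Finset.sum_congr rfl fun s _ => Finset.sum_congr rfl fun t _ => by ring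

lemma keyC {m : ℕ} (P Q R Z : Matrix (Fin m) (Fin m) ℂ) [Invertible R] (i j k : Fin m) :
    ∑ k', Z k k' * (∑ l, P i l * Q j l * R k' l)
      = ∑ s, ∑ t, ∑ u, P i s * Q j t * R k u *
          ((R⁻¹ * Z * R) u t * (if s = t then 1 else 0)) := by
  have hM : R * (R⁻¹ * Z * R) = Z * R := by
    rw [Matrix.mul_assoc, Matrix.mul_inv_cancel_left_of_invertible]
  have hstep : ∀ l, (Z * R) k l = ∑ u, R k u * (R⁻¹ * Z * R) u l := by
    intro l; rw [← hM, Matrix.mul_apply]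
  calc ∑ k', Z k k' * (∑ l, P i l * Q j l * R k' l)
      = ∑ l, (Z * R) k l * (P i l * Q j l) := by
        simp only [Finset.mul_sum, Matrix.mul_apply, Finset.sum_mul]
        rw [Finset.sum_comm]
        exact Finset.sum_congr rfl fun l _ => Finset.sum_congr rfl fun k' _ => by ring
    _ = ∑ l, ∑ u, R k u * (R⁻¹ * Z * R) u l * (P i l * Q j l) := by
        simp only [hstep, Finset.sum_mul]
    _ = ∑ s, ∑ t, ∑ u, P i s * Q j t * R k u *
          ((R⁻¹ * Z * R) u t * (if s = t then 1 else 0)) := by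
        simp only [mul_ite, mul_one, mul_zero, Finset.sum_ite_irrel, Finset.sum_const_zero,
          Finset.sum_ite_eq, Finset.mem_univ, if_pos]
        exact Finset.sum_congr rfl fun l _ => Finset.sum_congr rfl fun u _ => by ring


lemma triple_inj {m : ℕ} (P Q R : Matrix (Fin m) (Fin m) ℂ)
    [Invertible P] [Invertible Q] [Invertible R] (G : Fin m → Fin m → Fin m → ℂ) :
    (∀ i j k, ∑ s, P i s * (∑ t, Q j t * (∑ u, R k u * G s t u)) = 0)
      ↔ ∀ s t u, G s t u = 0 := by
  constructor
  · intro h s t u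
    have h1 : ∀ s j k, (∑ t, Q j t * (∑ u, R k u * G s t u)) = 0 := by
      intro s j k
      have := aux_inj P (fun s j k => ∑ t, Q j t * (∑ u, R k u * G s t u))
        (fun i => by funext j k; simpa [Finset.sum_apply, smul_eq_mul] using h i j k) s
      exact congrFun (congrFun this j) k
    have h2 : ∀ s t k, (∑ u, R k u * G s t u) = 0 := by
      intro s t k
      have := aux_inj Q (fun t k => ∑ u, R k u * G s t u)
        (fun j => by funext k; simpa [Finset.sum_apply, smul_eq_mul] using h1 s j k) t
      exact congrFun this k
    exact aux_inj R (fun u => G s t u)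
      (fun k => by simpa [smul_eq_mul] using h2 s t k) u
  · intro h i j k
    simp [h]

lemma mem_iff_conj {m : ℕ} (P Q R : Matrix (Fin m) (Fin m) ℂ)
    [Invertible P] [Invertible Q] [Invertible R] (X Y Z : Matrix (Fin m) (Fin m) ℂ) :
    (∀ i j k, (∑ i', X i i' * ∑ l, P i' l * Q j l * R k l)
        + (∑ j', Y j j' * ∑ l, P i l * Q j' l * R k l)
        + (∑ k', Z k k' * ∑ l, P i l * Q j l * R k' l) = 0)
      ↔ ∀ s t u, (P⁻¹ * X * P) s t * (if t = u then (1:ℂ) else 0)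
          + (Q⁻¹ * Y * Q) t s * (if s = u then 1 else 0)
          + (R⁻¹ * Z * R) u t * (if s = t then 1 else 0) = 0 := by
  have hkey : ∀ i j k, (∑ i', X i i' * ∑ l, P i' l * Q j l * R k l)
        + (∑ j', Y j j' * ∑ l, P i l * Q j' l * R k l)
        + (∑ k', Z k k' * ∑ l, P i l * Q j l * R k' l)
      = ∑ s, P i s * (∑ t, Q j t * (∑ u, R k u *
          ((P⁻¹ * X * P) s t * (if t = u then 1 else 0)
            + (Q⁻¹ * Y * Q) t s * (if s = u then 1 else 0)
            + (R⁻¹ * Z * R) u t * (if s = t then 1 else 0)))) := by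
    intro i j k
    rw [keyA P Q R X i j k, keyB P Q R Y i j k, keyC P Q R Z i j k]
    simp only [Finset.mul_sum, ← Finset.sum_add_distrib]
    exact Finset.sum_congr rfl fun s _ => Finset.sum_congr rfl fun t _ =>
      Finset.sum_congr rfl fun u _ => by ring
  rw [forall_congr' fun i => forall_congr' fun j => forall_congr' fun k =>
    (by rw [hkey i j k] : _ ↔ _)]
  exact triple_inj P Q R _


lemma finrank_symLie_of_matrices {m : ℕ} (P Q R : Matrix (Fin m) (Fin m) ℂ)
    [Invertible P] [Invertible Q] [Invertible R] :
    Module.finrank ℂ ↥(symLie (fun i j k => ∑ l, P i l * Q j l * R k l)) = 2 * m := by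
  set E : (Matrix (Fin m) (Fin m) ℂ × Matrix (Fin m) (Fin m) ℂ × Matrix (Fin m) (Fin m) ℂ) ≃ₗ[ℂ]
      (Matrix (Fin m) (Fin m) ℂ × Matrix (Fin m) (Fin m) ℂ × Matrix (Fin m) (Fin m) ℂ) :=
    (conjE P).prodCongr ((conjE Q).prodCongr (conjE R)) with hEdef
  have hset : symLie (fun i j k => ∑ l, P i l * Q j l * R k l)
      = (symLie (T0 m)).map (E.symm : _ →ₗ[ℂ] _) := by
    ext W
    obtain ⟨X, Y, Z⟩ := W
    rw [Submodule.mem_map_equiv, LinearEquiv.symm_symm]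
    rw [mem_symLie_iff, mem_symLie_T0_iff]
    simp only [hEdef, LinearEquiv.prodCongr_apply, conjE_apply]
    exact mem_iff_conj P Q R X Y Z
  rw [hset, LinearEquiv.finrank_map_eq E.symm, finrank_symLie_T0]

/-- For a rank-`m` tensor `T = Σ_{j=1}^m a_j⊗b_j⊗c_j` with `{a_j}`, `{b_j}`,
`{c_j}` each a basis (i.e. `T ≅ M_{⟨1⟩}^{⊕m}`, the unit tensor), the symmetry
Lie algebra `ĝ_T` has dimension `2m`. -/
theorem finrank_symLie_unitTensor (m : ℕ) (a b c : Fin m → Fin m → ℂ)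
    (ha : LinearIndependent ℂ a) (hb : LinearIndependent ℂ b)
    (hc : LinearIndependent ℂ c) :
    Module.finrank ℂ
      ↥(symLie (fun i j k => ∑ l, a l i * b l j * c l k)) = 2 * m := by
  rcases Nat.eq_zero_or_pos m with hm | hm
  · subst hm
    have hs : Subsingleton
        ↥(symLie (fun i j k => ∑ l, a l i * b l j * c l k)) := inferInstance
    rw [Module.finrank_zero_of_subsingleton]
  · haveI : Nonempty (Fin m) := Fin.pos_iff_nonempty.mp hm
    have cardeq : Fintype.card (Fin m) = Module.finrank ℂ (Fin m → ℂ) := by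
      simp [Module.finrank_fin_fun]
    haveI iP : Invertible ((Pi.basisFun ℂ (Fin m)).toMatrix a) := by
      rw [← coe_basisOfLinearIndependentOfCardEqFinrank ha cardeq]
      exact (Pi.basisFun ℂ (Fin m)).invertibleToMatrix
        (basisOfLinearIndependentOfCardEqFinrank ha cardeq)
    haveI iQ : Invertible ((Pi.basisFun ℂ (Fin m)).toMatrix b) := by
      rw [← coe_basisOfLinearIndependentOfCardEqFinrank hb cardeq]
      exact (Pi.basisFun ℂ (Fin m)).invertibleToMatrix
        (basisOfLinearIndependentOfCardEqFinrank hb cardeq)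
    haveI iR : Invertible ((Pi.basisFun ℂ (Fin m)).toMatrix c) := by
      rw [← coe_basisOfLinearIndependentOfCardEqFinrank hc cardeq]
      exact (Pi.basisFun ℂ (Fin m)).invertibleToMatrix
        (basisOfLinearIndependentOfCardEqFinrank hc cardeq)
    have hT : (fun i j k => ∑ l, a l i * b l j * c l k)
        = fun i j k => ∑ l, ((Pi.basisFun ℂ (Fin m)).toMatrix a) i l *
            ((Pi.basisFun ℂ (Fin m)).toMatrix b) j l *
            ((Pi.basisFun ℂ (Fin m)).toMatrix c) k l := by
      funext i j k
      exact Finset.sum_congr rfl fun l _ => by simp [Module.Basis.toMatrix_apply]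
    rw [hT]
    exact finrank_symLie_of_matrices _ _ _
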